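/- Let X be a complete, locally compact metric tree, let ν₋, ν₊ be antipodal probability measures on ∂X, and let μ be any Borel probability measure on the set of complete unit-speed geodesics of X with ends ν₋ and ν₊. Then for every oriented edge (xy) of X one has φ(xy) = μ(xy) − μ(yx), where μ(xy) (resp. μ(yx)) is the μ-measure of the geodesics traversing the edge from x to y (resp. from y to x) and φ(xy) is the flow defined by (ν₋,ν₊). Moreover, for every vertex x one has μ(x) ≥ φ(x), where μ(x) is the μ-measure of the set of geodesics passing through x and φ(x) is the flow through x. -/

import Mathlib

open MeasureTheory Metric Set
open scoped ENNReal NNReal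

noncomputable section

variable {X : Type*} [MetricSpace X]

/-- A metric space is *geodesic* if any two points are joined by an isometrically
parametrized path. -/
def IsGeodesicSpace (X : Type*) [MetricSpace X] : Prop :=
  ∀ x y : X, ∃ γ : ℝ → X, γ 0 = x ∧ γ (dist x y) = y ∧
    ∀ s ∈ Set.Icc (0 : ℝ) (dist x y), ∀ t ∈ Set.Icc (0 : ℝ) (dist x y),
      dist (γ s) (γ t) = |s - t|

/-- Zero-hyperbolicity (four point condition): the metric formulation of the fact
that all geodesic triangles are degenerate.  A complete geodesic zero-hyperbolic
space is a metric tree. -/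
def IsZeroHyperbolic (X : Type*) [MetricSpace X] : Prop :=
  ∀ x y z w : X, dist x y + dist z w ≤ max (dist x z + dist y w) (dist x w + dist y z)

/-- A unit-speed geodesic ray (only the behaviour for `t ≥ 0` matters). -/
def IsRay (γ : ℝ → X) : Prop :=
  ∀ s t : ℝ, 0 ≤ s → 0 ≤ t → dist (γ s) (γ t) = |s - t|

/-- The type of unit-speed geodesic rays of `X`. -/
def GeodesicRay (X : Type*) [MetricSpace X] : Type _ := {γ : ℝ → X // IsRay γ}

instance : TopologicalSpace (GeodesicRay X) :=
  inferInstanceAs (TopologicalSpace {γ : ℝ → X // IsRay γ})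

/-- Two rays are asymptotic when they stay at bounded distance from one another. -/
def Asymptotic (γ β : GeodesicRay X) : Prop :=
  ∃ C : ℝ, ∀ t : ℝ, 0 ≤ t → dist (γ.1 t) (β.1 t) ≤ C

/-- Asymptoty is an equivalence relation on rays. -/
def raySetoid (X : Type*) [MetricSpace X] : Setoid (GeodesicRay X) where
  r := Asymptotic
  iseqv := by
    refine ⟨fun γ => ⟨0, fun t _ => by simp⟩, ?_, ?_⟩
    · rintro γ β ⟨C, hC⟩
      exact ⟨C, fun t ht => by rw [dist_comm]; exact hC t ht⟩
    · rintro γ β δ ⟨C₁, h₁⟩ ⟨C₂, h₂⟩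
      exact ⟨C₁ + C₂, fun t ht => (dist_triangle _ _ _).trans (add_le_add (h₁ t ht) (h₂ t ht))⟩

/-- The geodesic boundary of `X`: asymptote classes of unit-speed geodesic rays. -/
def Boundary (X : Type*) [MetricSpace X] : Type _ := Quotient (raySetoid X)

/-- The class of a ray in the boundary. -/
def boundaryMk (γ : GeodesicRay X) : Boundary X := Quotient.mk (raySetoid X) γ

instance : TopologicalSpace (Boundary X) :=
  inferInstanceAs (TopologicalSpace (Quotient (raySetoid X)))

instance : MeasurableSpace (Boundary X) := borel _

instance : BorelSpace (Boundary X) := ⟨rfl⟩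

/-- The type of complete unit-speed geodesics (geodesic lines) of `X`. -/
def GeodesicLine (X : Type*) [MetricSpace X] : Type _ := {γ : ℝ → X // Isometry γ}

instance : TopologicalSpace (GeodesicLine X) :=
  inferInstanceAs (TopologicalSpace {γ : ℝ → X // Isometry γ})

instance : MeasurableSpace (GeodesicLine X) := borel _

instance : BorelSpace (GeodesicLine X) := ⟨rfl⟩

/-- Evaluation of a geodesic line at time `t`. -/
def eval (t : ℝ) (γ : GeodesicLine X) : X := γ.1 t

/-- The positive-time ray of a geodesic line. -/
def posRay (γ : GeodesicLine X) : GeodesicRay X :=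
  ⟨fun t => γ.1 t, fun s t _ _ => by rw [γ.2.dist_eq, Real.dist_eq]⟩

/-- The negative-time ray of a geodesic line. -/
def negRay (γ : GeodesicLine X) : GeodesicRay X :=
  ⟨fun t => γ.1 (-t), fun s t _ _ => by
    rw [γ.2.dist_eq, Real.dist_eq, neg_sub_neg, abs_sub_comm]⟩

/-- The end at `+∞` of a geodesic line (`e₊∞`). -/
def endTop (γ : GeodesicLine X) : Boundary X := boundaryMk (posRay γ)

/-- The end at `-∞` of a geodesic line (`e₋∞`). -/
def endBot (γ : GeodesicLine X) : Boundary X := boundaryMk (negRay γ)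


/-- `P` is a coupling of `μ` and `ν`. -/
def IsCoupling {Y Z : Type*} [MeasurableSpace Y] [MeasurableSpace Z]
    (μ : Measure Y) (ν : Measure Z) (P : Measure (Y × Z)) : Prop :=
  IsProbabilityMeasure P ∧ P.map Prod.fst = μ ∧ P.map Prod.snd = ν

/-- The support of a Borel measure: points all of whose open neighbourhoods have
positive measure. -/
def msupport {Y : Type*} [TopologicalSpace Y] [MeasurableSpace Y] (μ : Measure Y) : Set Y :=
  {y | ∀ U : Set Y, IsOpen U → y ∈ U → μ U ≠ 0}

variable {X : Type*} [MetricSpace X] [MeasurableSpace X]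

/-- Finite second moment with respect to the base point `x₀`. -/
def FiniteSecondMoment (x₀ : X) (μ : Measure X) : Prop :=
  ∫⁻ x, edist x x₀ ^ 2 ∂μ < ⊤

/-- The squared quadratic Wasserstein "distance" (possibly infinite) between two
measures on `X`. -/
def W2sq (μ ν : Measure X) : ℝ≥0∞ :=
  ⨅ (P : Measure (X × X)) (_ : IsCoupling μ ν P), ∫⁻ p, edist p.1 p.2 ^ 2 ∂P


/-- `AntipodalMeasures νneg νpos`: the two measures are concentrated on disjoint Borel
sets (the antipodality condition for measures on the boundary of a tree). -/
def AntipodalMeasures {X : Type*} [MetricSpace X]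
    (νneg νpos : MeasureTheory.Measure (Boundary X)) : Prop :=
  ∃ A B : Set (Boundary X), MeasurableSet A ∧ MeasurableSet B ∧ Disjoint A B ∧
    νneg Aᶜ = 0 ∧ νpos Bᶜ = 0

variable {X : Type*} [MetricSpace X]

/-- The squared "distance from `x₀` to the geodesic line with ends `ξ` and `ζ`"
`D₀(ξ,ζ)²` (the squared Gromov product), as an extended nonnegative real.  If no
such line exists — in a tree, exactly when `ξ = ζ` — the infimum over the empty
set gives the value `∞`, in accordance with the convention `D₀(ξ,ξ) = ∞`. -/
def D0sq (x₀ : X) (ξ ζ : Boundary X) : ℝ≥0∞ :=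
  ⨅ (γ : GeodesicLine X) (_ : endBot γ = ξ ∧ endTop γ = ζ),
    ENNReal.ofReal (Metric.infDist x₀ (Set.range γ.1)) ^ 2

/-- Minus the squared Gromov product, as a cost function with values in `[-∞, 0]`. -/
def negD0sq (x₀ : X) (ξ ζ : Boundary X) : EReal := -((D0sq x₀ ξ ζ : ℝ≥0∞) : EReal)

/-- A dynamical transport plan `μ` (a measure on geodesic lines) is a displacement
interpolation of a complete unit-speed geodesic of the Wasserstein space `W₂(X)`:
all its time-`t` marginals lie in `W₂(X)` and they form a unit-speed geodesic. -/
def IsDisplacementGeodesic [MeasurableSpace X] (x₀ : X)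
    (μ : MeasureTheory.Measure (GeodesicLine X)) : Prop :=
  MeasureTheory.IsProbabilityMeasure μ ∧
  (∀ t : ℝ, FiniteSecondMoment x₀ (μ.map (eval t))) ∧
  ∀ s t : ℝ, W2sq (μ.map (eval s)) (μ.map (eval t)) = ENNReal.ofReal ((s - t) ^ 2)

/-- Two complete geodesics are antagonist if one of them goes through two distinct
points `x, y` in this order while the other goes through them in the reverse order. -/
def Antagonist (γ β : GeodesicLine X) : Prop :=
  ∃ x y : X, x ≠ y ∧ ∃ t u v w : ℝ, t < u ∧ v < w ∧
    γ.1 t = x ∧ γ.1 u = y ∧ β.1 v = y ∧ β.1 w = x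

/-- `γ` traverses the edge from `x` to `y` (in this orientation). -/
def Traverses (γ : GeodesicLine X) (x y : X) : Prop :=
  ∃ t : ℝ, γ.1 t = x ∧ γ.1 (t + dist x y) = y

/-- The closest point of the geodesic line `γ` to `x₀` is `x`. -/
def ClosestAt (x₀ : X) (γ : GeodesicLine X) (x : X) : Prop :=
  (∃ t : ℝ, γ.1 t = x) ∧ ∀ t : ℝ, dist x₀ x ≤ dist x₀ (γ.1 t)

/-- A set `S ⊆ Y × Y` is cyclically monotone for the cost `c`. -/
def CyclicallyMonotone {Y : Type*} (c : Y → Y → ℝ) (S : Set (Y × Y)) : Prop :=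
  ∀ (n : ℕ) (p : Fin n → Y × Y), (∀ i, p i ∈ S) → ∀ σ : Equiv.Perm (Fin n),
    ∑ i, c (p i).1 (p i).2 ≤ ∑ i, c (p i).1 (p (σ i)).2

/-- Cyclical monotonicity for a cost with values in the extended reals. -/
def CyclicallyMonotoneE {Y : Type*} (c : Y → Y → EReal) (S : Set (Y × Y)) : Prop :=
  ∀ (n : ℕ) (p : Fin n → Y × Y), (∀ i, p i ∈ S) → ∀ σ : Equiv.Perm (Fin n),
    ∑ i, c (p i).1 (p i).2 ≤ ∑ i, c (p i).1 (p (σ i)).2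

/-- The connected components of the complement of a point (the "directions" at `x`:
edges of the tree emanating from `x`, when `x` is a vertex). -/
def complComponents (x : X) : Set (Set X) :=
  {C | ∃ y, y ≠ x ∧ C = connectedComponentIn ({x}ᶜ) y}

/-- `x` is a vertex of the tree `X`: the complement of `x` does not have exactly
two connected components (interior points of edges have exactly two). -/
def IsVertex (x : X) : Prop := (complComponents x).ncard ≠ 2

/-- `(x, y)` is an oriented edge: `x ≠ y` are vertices and no vertex lies strictly
between them. -/
def IsOrientedEdge (x y : X) : Prop :=
  x ≠ y ∧ IsVertex x ∧ IsVertex y ∧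
    ∀ z : X, dist x z + dist z y = dist x y → z = x ∨ z = y ∨ ¬ IsVertex z

/-- The set of boundary points lying in the direction of the set `C` as seen
from `x`: classes of rays starting at `x` that immediately enter `C`. -/
def dirBoundary (x : X) (C : Set X) : Set (Boundary X) :=
  {ξ | ∃ γ : GeodesicRay X, γ.1 0 = x ∧ boundaryMk γ = ξ ∧ ∀ t : ℝ, 0 < t → γ.1 t ∈ C}

/-- The *future* `(xy)₊` of the oriented edge `(x, y)`: boundary points `ξ` such
that the ray from `x` to `ξ` passes through `y`, i.e. the boundary points of the
component of the complement of the open edge containing `y`. -/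
def future (x y : X) : Set (Boundary X) :=
  {ξ | ∃ γ : GeodesicRay X, γ.1 0 = x ∧ boundaryMk γ = ξ ∧ γ.1 (dist x y) = y}

/-- The value of the signed measure `ν = νpos - νneg` on a set of boundary points. -/
def signedFlow (νneg νpos : MeasureTheory.Measure (Boundary X)) (A : Set (Boundary X)) : ℝ :=
  (νpos A).toReal - (νneg A).toReal

/-- The flow `φ(xy) = ν((xy)₊)` through the oriented edge `(x, y)`. -/
def edgeFlow (νneg νpos : MeasureTheory.Measure (Boundary X)) (x y : X) : ℝ :=
  signedFlow νneg νpos (future x y)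

/-- The flow `φ(x)` through the point `x`: the sum, over the directions at `x`
carrying a positive flow, of these flows (outflow = inflow). -/
def vertexFlow (νneg νpos : MeasureTheory.Measure (Boundary X)) (x : X) : ℝ :=
  ∑' C : complComponents x, max (signedFlow νneg νpos (dirBoundary x C.1)) 0

/-- The flow at `x` in the direction of the base point `x₀` (the flow through the
edge at `x` along which the distance to `x₀` decreases), signed as going out of `x`. -/
def towardFlow (νneg νpos : MeasureTheory.Measure (Boundary X)) (x₀ x : X) : ℝ :=
  signedFlow νneg νpos (dirBoundary x (connectedComponentIn ({x}ᶜ) x₀))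

open Classical in
/-- The specific flow `φ⁰(x)`: for `x ≠ x₀`, the flow `φ(x)` minus the contribution
of the edge at `x` pointing toward `x₀` when that edge is positive (where it is
removed from the sum of outgoing positive flows) or negative (where it is removed
from the equal sum of incoming flows) — in both cases its absolute value is
subtracted — and `φ⁰(x₀) = φ(x₀)`. -/
def specificFlow (νneg νpos : MeasureTheory.Measure (Boundary X)) (x₀ x : X) : ℝ :=
  if x = x₀ then vertexFlow νneg νpos x
  else vertexFlow νneg νpos x - |towardFlow νneg νpos x₀ x|


end

noncomputable section AuxTree

open Set

variable {X : Type*} [MetricSpace X]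

/-- Raw ray property. -/
def IsRayF (g : ℝ → X) : Prop := ∀ s t : ℝ, 0 ≤ s → 0 ≤ t → dist (g s) (g t) = |s - t|

/-- The Busemann-type constant of a ray seen from `p`. -/
noncomputable def rayBF (p : X) (g : ℝ → X) : ℝ :=
  dist p (g (dist p (g 0) + 1)) - (dist p (g 0) + 1)

lemma IsRayF.dist_le {g : ℝ → X} (hg : IsRayF g) (p : X) {s t : ℝ} (hs : 0 ≤ s) (ht : 0 ≤ t) :
    dist p (g s) ≤ dist p (g t) + |s - t| := by
  have := dist_triangle p (g t) (g s)
  rw [dist_comm (g t) (g s), hg s t hs ht] at this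
  linarith

/-- doubled Gromov product -/
noncomputable def gpr (p u v : X) : ℝ := dist p u + dist p v - dist u v

lemma gpr_comm (p u v : X) : gpr p u v = gpr p v u := by
  unfold gpr; rw [dist_comm u v]; ring

lemma gpr_self {p u : X} : gpr p u u = 2 * dist p u := by
  unfold gpr; simp; ring

lemma gpr_min (htree : IsZeroHyperbolic X) (p u v w : X) :
    min (gpr p u v) (gpr p v w) ≤ gpr p u w := by
  have h := htree u w p v
  simp only [gpr]
  rcases le_max_iff.1 h with h' | h'
  · refine le_trans (min_le_right _ _) ?_
    rw [dist_comm v w] at *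
    linarith [dist_comm p u, dist_comm u p, dist_comm w v]
  · refine le_trans (min_le_left _ _) ?_
    linarith [dist_comm w p, dist_comm p w]

section RayFormula

variable (htree : IsZeroHyperbolic X) {g : ℝ → X} (hg : IsRayF g) (p : X)

include htree hg in
lemma rayF_four (t T' : ℝ) (ht : 0 ≤ t) (hT' : t ≤ T') :
    dist p (g t) + T' ≤ max (dist p (g 0) + (T' - t)) (dist p (g T') + t) := by
  have h := htree p (g t) (g 0) (g T')
  have h1 : dist (g 0) (g T') = T' := by
    rw [hg 0 T' le_rfl (ht.trans hT')]; rw [abs_of_nonpos (by linarith)]; ring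
  have h2 : dist (g t) (g T') = T' - t := by
    rw [hg t T' ht (ht.trans hT')]; rw [abs_of_nonpos (by linarith)]; ring
  have h3 : dist (g t) (g 0) = t := by
    rw [hg t 0 ht le_rfl]; rw [abs_of_nonneg (by linarith)]; ring
  rw [h1, h2, h3] at h
  rcases le_max_iff.1 h with h' | h'
  · exact le_max_of_le_left (by linarith)
  · exact le_max_of_le_right (by linarith)

include htree hg in
lemma rayBF_spec : ∀ T, dist p (g 0) + 1 ≤ T → dist p (g T) = rayBF p g + T := by
  set f0 := dist p (g 0) with hf0
  have hf0n : 0 ≤ f0 := dist_nonneg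
  have mono : ∀ T T', f0 + 1 ≤ T → T ≤ T' → dist p (g T) - T = dist p (g T') - T' := by
    intro T T' hT hTT'
    have hT0 : (0:ℝ) ≤ T := by linarith
    have hT'0 : (0:ℝ) ≤ T' := by linarith
    have h1 : dist p (g T) - T ≥ dist p (g T') - T' := by
      have := hg.dist_le p hT'0 hT0
      rw [abs_of_nonneg (by linarith)] at this
      linarith
    have h2 : dist p (g T) - T ≤ dist p (g T') - T' := by
      have h := rayF_four htree hg p T T' hT0 hTT'
      rcases le_max_iff.1 h with h' | h'
      · have : dist p (g T) ≤ f0 - T := by linarith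
        have : (0:ℝ) ≤ f0 - T := le_trans dist_nonneg this
        linarith
      · linarith
    linarith
  intro T hT
  have := mono (f0 + 1) (max (f0+1) T) le_rfl (le_max_left _ _)
  have h2 := mono T (max (f0+1) T) hT (le_max_right _ _)
  have : dist p (g T) - T = dist p (g (f0+1)) - (f0+1) := by rw [h2, this]
  simp only [rayBF, ← hf0]
  linarith

include htree hg in
lemma ray_formula : ∀ t, 0 ≤ t → dist p (g t) = max (dist p (g 0) - t) (rayBF p g + t) := by
  set f0 := dist p (g 0) with hf0
  have hf0n : 0 ≤ f0 := dist_nonneg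
  intro t ht
  set T' := max t (f0 + 1) with hT'
  have h1 : t ≤ T' := le_max_left _ _
  have hbT : dist p (g T') = rayBF p g + T' :=
    rayBF_spec htree hg p T' (le_max_right _ _)
  apply le_antisymm
  · have h := rayF_four htree hg p t T' ht h1
    rw [hbT] at h
    rcases le_max_iff.1 h with h' | h'
    · exact le_max_of_le_left (by linarith)
    · exact le_max_of_le_right (by linarith)
  · apply max_le
    · have := hg.dist_le p (s := 0) (t := t) le_rfl ht
      rw [abs_of_nonpos (by linarith)] at this
      linarith
    · have := hg.dist_le p (s := T') (t := t) (le_trans ht h1) ht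
      rw [abs_of_nonneg (by linarith)] at this
      rw [hbT] at this
      linarith

include htree hg in
lemma rayBF_le : rayBF p g ≤ dist p (g 0) := by
  have h := rayBF_spec htree hg p (dist p (g 0) + 1) le_rfl
  have hd0 : (0:ℝ) ≤ dist p (g 0) := dist_nonneg
  have h2 := hg.dist_le p (s := dist p (g 0) + 1) (t := 0)
    (by linarith) le_rfl
  rw [abs_of_nonneg (by linarith), h] at h2
  linarith

include hg in
lemma neg_le_rayBF : -dist p (g 0) ≤ rayBF p g := by
  have hd0 : (0:ℝ) ≤ dist p (g 0) := dist_nonneg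
  have h2 := dist_triangle (g 0) p (g (dist p (g 0) + 1))
  have h3 := hg 0 (dist p (g 0) + 1) le_rfl (by linarith)
  rw [abs_of_nonpos (by linarith)] at h3
  simp only [rayBF]
  rw [dist_comm (g 0) p] at h2
  linarith

end RayFormula
end AuxTree
noncomputable section AuxLine

open Set

variable {X : Type*} [MetricSpace X]

lemma line_dist (γ : GeodesicLine X) (s t : ℝ) : dist (γ.1 s) (γ.1 t) = |s - t| := by
  rw [γ.2.dist_eq, Real.dist_eq]

lemma line_pos_isRayF (γ : GeodesicLine X) : IsRayF (fun t => γ.1 t) := by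
  intro s t _ _; exact line_dist γ s t

lemma line_neg_isRayF (γ : GeodesicLine X) : IsRayF (fun t => γ.1 (-t)) := by
  intro s t _ _
  rw [line_dist γ, neg_sub_neg, abs_sub_comm]

noncomputable def lineB (p : X) (γ : GeodesicLine X) : ℝ := rayBF p (fun t => γ.1 t)
noncomputable def lineA (p : X) (γ : GeodesicLine X) : ℝ := rayBF p (fun t => γ.1 (-t))

variable (htree : IsZeroHyperbolic X)

include htree in
lemma lineB_spec (p : X) (γ : GeodesicLine X) :
    ∀ T, dist p (γ.1 0) + 1 ≤ T → dist p (γ.1 T) = lineB p γ + T :=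
  rayBF_spec htree (line_pos_isRayF γ) p

include htree in
lemma lineA_spec (p : X) (γ : GeodesicLine X) :
    ∀ T, dist p (γ.1 0) + 1 ≤ T → dist p (γ.1 (-T)) = lineA p γ + T := by
  have h := rayBF_spec htree (line_neg_isRayF γ) p
  simpa [neg_zero, lineA] using h

include htree in
lemma line_formula (p : X) (γ : GeodesicLine X) :
    ∀ t, dist p (γ.1 t) = max (lineA p γ - t) (lineB p γ + t) := by
  set A := lineA p γ with hA
  set B := lineB p γ with hB
  set f0 := dist p (γ.1 0) with hf0
  have hf0n : (0:ℝ) ≤ f0 := dist_nonneg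
  have hposf := ray_formula htree (line_pos_isRayF γ) p
  have hnegf0 := ray_formula htree (line_neg_isRayF γ) p
  have hnegf : ∀ u, 0 ≤ u → dist p (γ.1 (-u)) = max (f0 - u) (A + u) := by
    intro u hu
    have := hnegf0 u hu
    simpa [neg_zero, hA, hf0, lineA] using this
  have hAle : A ≤ f0 := by
    have := rayBF_le htree (line_neg_isRayF γ) p
    simpa [neg_zero, hA, hf0, lineA] using this
  have hBle : B ≤ f0 := rayBF_le htree (line_pos_isRayF γ) p
  have f0max : f0 = max A B := by
    refine le_antisymm ?_ (max_le hAle hBle)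
    set T := f0 + 1 with hT
    have h := htree p (γ.1 0) (γ.1 (-T)) (γ.1 T)
    have e1 : dist (γ.1 (-T)) (γ.1 T) = 2 * T := by
      rw [line_dist γ]; rw [abs_of_nonpos (by linarith)]; ring
    have e2 : dist (γ.1 0) (γ.1 T) = T := by
      rw [line_dist γ]; rw [abs_of_nonpos (by linarith)]; ring
    have e3 : dist (γ.1 0) (γ.1 (-T)) = T := by
      rw [line_dist γ]; rw [abs_of_nonneg (by linarith)]; ring
    have e4 : dist p (γ.1 T) = B + T := lineB_spec htree p γ T (by linarith)
    have e5 : dist p (γ.1 (-T)) = A + T := lineA_spec htree p γ T (by linarith)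
    rw [e1, e2, e3, e4, e5] at h
    rcases le_max_iff.1 h with h' | h'
    · exact le_max_of_le_left (by linarith)
    · exact le_max_of_le_right (by linarith)
  intro t
  rcases le_total 0 t with ht | ht
  · have h0 := hposf t ht
    have h : dist p (γ.1 t) = max (f0 - t) (B + t) := h0
    rw [f0max] at h
    rcases le_total A B with hab | hab
    · rw [max_eq_right hab] at h
      rw [h, max_eq_right (by linarith), max_eq_right (by linarith)]
    · rw [max_eq_left hab] at h
      exact h
  · have h0 := hnegf (-t) (by linarith)
    rw [neg_neg] at h0
    have h : dist p (γ.1 t) = max (f0 + t) (A - t) := by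
      rw [h0]; congr 1 <;> ring
    rw [f0max] at h
    rcases le_total A B with hab | hab
    · rw [max_eq_right hab] at h
      rw [h, max_comm]
    · rw [max_eq_left hab] at h
      rw [h, max_eq_right (by linarith), max_eq_left (by linarith)]

include htree in
lemma lineAB_nonneg (p : X) (γ : GeodesicLine X) : 0 ≤ lineA p γ + lineB p γ := by
  have h := line_formula htree p γ ((lineA p γ - lineB p γ) / 2)
  have h2 : (0:ℝ) ≤ dist p (γ.1 ((lineA p γ - lineB p γ) / 2)) := dist_nonneg
  rw [h, show lineA p γ - (lineA p γ - lineB p γ) / 2 = (lineA p γ + lineB p γ)/2 by ring,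
    show lineB p γ + (lineA p γ - lineB p γ) / 2 = (lineA p γ + lineB p γ)/2 by ring,
    max_self] at h2
  linarith

include htree in
lemma line_at (p : X) (γ : GeodesicLine X) (h : lineA p γ + lineB p γ = 0) :
    γ.1 (lineA p γ) = p := by
  have hf := line_formula htree p γ (lineA p γ)
  have : dist p (γ.1 (lineA p γ)) = 0 := by
    rw [hf]
    have h1 : lineA p γ - lineA p γ = 0 := by ring
    have h2 : lineB p γ + lineA p γ = 0 := by linarith
    rw [h1, h2]; simp
  rw [dist_comm] at this
  exact dist_eq_zero.1 this

include htree in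
lemma line_through (p : X) (γ : GeodesicLine X) (t : ℝ) (h : γ.1 t = p) :
    lineA p γ = t ∧ lineB p γ = -t := by
  have hf := line_formula htree p γ t
  have hd : dist p (γ.1 t) = 0 := by rw [h, dist_self]
  rw [hf] at hd
  have hnn := lineAB_nonneg htree p γ
  have h1 : lineA p γ - t ≤ 0 := by
    have := le_max_left (lineA p γ - t) (lineB p γ + t); linarith
  have h2 : lineB p γ + t ≤ 0 := by
    have := le_max_right (lineA p γ - t) (lineB p γ + t); linarith
  constructor <;> linarith

include htree in
lemma line_mem_iff (p : X) (γ : GeodesicLine X) :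
    (∃ t, γ.1 t = p) ↔ lineA p γ + lineB p γ = 0 := by
  constructor
  · rintro ⟨t, ht⟩
    obtain ⟨h1, h2⟩ := line_through htree p γ t ht
    rw [h1, h2]; ring
  · intro h
    exact ⟨lineA p γ, line_at htree p γ h⟩

include htree in
lemma lineB_sub_le (p q : X) (γ : GeodesicLine X) : lineB p γ - lineB q γ ≤ dist p q := by
  set T := max (dist p (γ.1 0) + 1) (dist q (γ.1 0) + 1) with hT
  have e1 : dist p (γ.1 T) = lineB p γ + T := lineB_spec htree p γ T (le_max_left _ _)
  have e2 : dist q (γ.1 T) = lineB q γ + T := lineB_spec htree q γ T (le_max_right _ _)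
  have := dist_triangle p q (γ.1 T)
  rw [e1] at this; rw [e2] at this
  linarith

include htree in
lemma lineA_sub_le (p q : X) (γ : GeodesicLine X) : lineA p γ - lineA q γ ≤ dist p q := by
  set T := max (dist p (γ.1 0) + 1) (dist q (γ.1 0) + 1) with hT
  have e1 : dist p (γ.1 (-T)) = lineA p γ + T := lineA_spec htree p γ T (le_max_left _ _)
  have e2 : dist q (γ.1 (-T)) = lineA q γ + T := lineA_spec htree q γ T (le_max_right _ _)
  have := dist_triangle p q (γ.1 (-T))
  rw [e1] at this; rw [e2] at this
  linarith

include htree in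
/-- The key four-point inequality relating the invariants of two points. -/
lemma line_cross (p q : X) (γ : GeodesicLine X) :
    lineB p γ + lineA q γ ≤ max (dist p q) (lineA p γ + lineB q γ) := by
  set T := max (dist p (γ.1 0) + 1) (dist q (γ.1 0) + 1) with hT
  have hT0 : (0:ℝ) < T := lt_of_lt_of_le (by positivity) (le_max_left _ _)
  have e1 : dist p (γ.1 T) = lineB p γ + T := lineB_spec htree p γ T (le_max_left _ _)
  have e2 : dist q (γ.1 T) = lineB q γ + T := lineB_spec htree q γ T (le_max_right _ _)
  have e3 : dist p (γ.1 (-T)) = lineA p γ + T := lineA_spec htree p γ T (le_max_left _ _)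
  have e4 : dist q (γ.1 (-T)) = lineA q γ + T := lineA_spec htree q γ T (le_max_right _ _)
  have e5 : dist (γ.1 T) (γ.1 (-T)) = 2 * T := by
    rw [line_dist γ]; rw [abs_of_nonneg (by linarith)]; ring
  have h := htree p (γ.1 T) q (γ.1 (-T))
  rw [e1, e4, e5, e3] at h
  rw [dist_comm (γ.1 T) q] at h
  rw [e2] at h
  rcases le_max_iff.1 h with h' | h'
  · exact le_max_of_le_left (by linarith)
  · exact le_max_of_le_right (by linarith)

end AuxLine
noncomputable section AuxSeg

open Set

variable {X : Type*} [MetricSpace X]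

def IsGeodFT (u v : X) (c : ℝ → X) : Prop :=
  c 0 = u ∧ c (dist u v) = v ∧
    ∀ s ∈ Set.Icc (0:ℝ) (dist u v), ∀ t ∈ Set.Icc (0:ℝ) (dist u v),
      dist (c s) (c t) = |s - t|

noncomputable def seg (hgeo : IsGeodesicSpace X) (u v : X) : ℝ → X :=
  Classical.choose (hgeo u v)

lemma seg_spec (hgeo : IsGeodesicSpace X) (u v : X) : IsGeodFT u v (seg hgeo u v) := by
  obtain ⟨h1, h2, h3⟩ := Classical.choose_spec (hgeo u v)
  exact ⟨h1, h2, h3⟩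

lemma IsGeodFT.dist_from {u v : X} {c : ℝ → X} (hc : IsGeodFT u v c)
    {s : ℝ} (hs : s ∈ Set.Icc (0:ℝ) (dist u v)) : dist u (c s) = s := by
  have h := hc.2.2 s hs 0 ⟨le_rfl, dist_nonneg⟩
  rw [hc.1] at h
  rw [dist_comm, h, abs_of_nonneg (by linarith [hs.1])]
  ring

lemma IsGeodFT.dist_to {u v : X} {c : ℝ → X} (hc : IsGeodFT u v c)
    {s : ℝ} (hs : s ∈ Set.Icc (0:ℝ) (dist u v)) : dist (c s) v = dist u v - s := by
  have h := hc.2.2 s hs (dist u v) ⟨dist_nonneg, le_rfl⟩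
  rw [hc.2.1] at h
  rw [h, abs_of_nonpos (by linarith [hs.2])]
  ring

lemma geod_unique (htree : IsZeroHyperbolic X) {u v : X} {c c' : ℝ → X}
    (hc : IsGeodFT u v c) (hc' : IsGeodFT u v c') {s : ℝ}
    (hs : s ∈ Set.Icc (0:ℝ) (dist u v)) : c s = c' s := by
  have h := htree (c s) (c' s) u v
  have e1 : dist (c s) u = s := by rw [dist_comm]; exact hc.dist_from hs
  have e2 : dist (c' s) v = dist u v - s := hc'.dist_to hs
  have e3 : dist (c s) v = dist u v - s := hc.dist_to hs
  have e4 : dist (c' s) u = s := by rw [dist_comm]; exact hc'.dist_from hs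
  rw [e1, e2, e3, e4] at h
  have : dist (c s) (c' s) ≤ 0 := by
    rcases le_max_iff.1 h with h' | h' <;> linarith
  exact dist_le_zero.1 this

lemma geod_concat (htree : IsZeroHyperbolic X) (hgeo : IsGeodesicSpace X)
    {u v w : X} (h : dist u w + dist w v = dist u v) {c : ℝ → X}
    (hc : IsGeodFT u v c) : c (dist u w) = w := by
  set d1 := dist u w with hd1
  set d2 := dist w v with hd2
  set d := dist u v with hd
  have hd1n : 0 ≤ d1 := dist_nonneg
  have hd2n : 0 ≤ d2 := dist_nonneg
  have hA : IsGeodFT u w (seg hgeo u w) := seg_spec hgeo u w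
  have hB : IsGeodFT w v (seg hgeo w v) := seg_spec hgeo w v
  set c1 := seg hgeo u w with hc1
  set c2 := seg hgeo w v with hc2
  obtain ⟨a1, a2, a3⟩ := hA
  obtain ⟨b1, b2, b3⟩ := hB
  have hA : IsGeodFT u w c1 := ⟨a1, a2, a3⟩
  have hB : IsGeodFT w v c2 := ⟨b1, b2, b3⟩
  set c' : ℝ → X := fun s => if s ≤ d1 then c1 s else c2 (s - d1) with hc'da
  have key : ∀ s, 0 ≤ s → s ≤ d → ∀ t, s ≤ t → t ≤ d → dist (c' s) (c' t) = t - s := by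
    intro s hs0 hsd t hst htd
    by_cases h1 : t ≤ d1
    · have h2 : s ≤ d1 := le_trans hst h1
      simp only [hc'da, if_pos h1, if_pos h2]
      rw [a3 s ⟨hs0, h2⟩ t ⟨le_trans hs0 hst, h1⟩, abs_of_nonpos (by linarith)]
      ring
    · push_neg at h1
      by_cases h2 : s ≤ d1
      · simp only [hc'da, if_pos h2, if_neg (not_le.2 h1)]
        have e1 : dist (c1 s) w = d1 - s := hA.dist_to ⟨hs0, h2⟩
        have htmem : t - d1 ∈ Set.Icc (0:ℝ) d2 := ⟨by linarith, by linarith⟩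
        have e2 : dist w (c2 (t - d1)) = t - d1 := hB.dist_from htmem
        have e3 : dist u (c1 s) = s := hA.dist_from ⟨hs0, h2⟩
        have e4 : dist (c2 (t - d1)) v = d2 - (t - d1) := hB.dist_to htmem
        have upper : dist (c1 s) (c2 (t - d1)) ≤ t - s := by
          have := dist_triangle (c1 s) w (c2 (t - d1))
          rw [e1, e2] at this; linarith
        have lower : t - s ≤ dist (c1 s) (c2 (t - d1)) := by
          have t1 := dist_triangle u (c1 s) (c2 (t - d1))
          have t2 := dist_triangle u (c2 (t - d1)) v
          rw [e3] at t1; rw [e4] at t2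
          have : d ≤ dist u (c2 (t-d1)) + (d2 - (t - d1)) := by
            rw [hd]; exact t2
          linarith
        linarith
      · push_neg at h2
        simp only [hc'da, if_neg (not_le.2 h2), if_neg (not_le.2 h1)]
        rw [b3 (s - d1) ⟨by linarith, by linarith⟩ (t - d1) ⟨by linarith, by linarith⟩,
          abs_of_nonpos (by linarith)]
        ring
  have hc'g : IsGeodFT u v c' := by
    refine ⟨?_, ?_, ?_⟩
    · simp only [hc'da, if_pos hd1n, a1]
    · by_cases hh : d ≤ d1
      · have : d1 = d := le_antisymm (by linarith) hh
        have hd2z : d2 = 0 := by linarith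
        have hwv : w = v := by rw [← dist_eq_zero.1 hd2z]
        simp only [hc'da, if_pos hh]
        rw [if_pos (show dist u v ≤ d1 from hh)]
        have hde : dist u v = dist u w := this.symm
        rw [hde, a2, hwv]
      · push_neg at hh
        simp only [hc'da, if_neg (not_le.2 hh)]
        rw [if_neg (show ¬ dist u v ≤ d1 from not_le.2 hh)]
        have : d - d1 = d2 := by linarith
        show c2 (d - d1) = v
        rw [this]; exact b2
    · intro s hs t ht
      rcases le_total s t with hst | hst
      · rw [key s hs.1 hs.2 t hst ht.2, abs_of_nonpos (by linarith)]; ring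
      · rw [dist_comm, key t ht.1 ht.2 s hst hs.2, abs_of_nonneg (by linarith)]
  have := geod_unique htree hc hc'g (s := d1) ⟨hd1n, by linarith⟩
  rw [this]
  simp only [hc'da, if_pos le_rfl, a1]
  exact a2

end AuxSeg
noncomputable section AuxCanon

open Set

variable {X : Type*} [MetricSpace X]

variable (htree : IsZeroHyperbolic X) (hgeo : IsGeodesicSpace X)

include htree in
lemma ray_unique_origin {g h : ℝ → X} (hg : IsRayF g) (hh : IsRayF h)
    (h0 : g 0 = h 0) {C : ℝ} (hC : ∀ t, 0 ≤ t → dist (g t) (h t) ≤ C) :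
    ∀ s, 0 ≤ s → g s = h s := by
  intro s hs
  have hps : dist (g s) (h 0) = s := by
    rw [← h0, hg s 0 hs le_rfl, abs_of_nonneg (by linarith)]; ring
  set T := s + 1 + |C| with hT
  have hCn : (0:ℝ) ≤ |C| := abs_nonneg C
  have hCC : C ≤ |C| := le_abs_self C
  have e1 : dist (g s) (h T) = rayBF (g s) h + T :=
    rayBF_spec htree hh (g s) T (by rw [hps]; linarith)
  set m := rayBF (g s) h with hm
  have hfour := htree (g s) (h T) (g 0) (g T)
  have d1 : dist (g 0) (g T) = T := by
    rw [hg 0 T le_rfl (by linarith), abs_of_nonpos (by linarith)]; ring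
  have d2 : dist (g s) (g 0) = s := by
    rw [hg s 0 hs le_rfl, abs_of_nonneg (by linarith)]; ring
  have d3 : dist (h T) (g T) ≤ C := by rw [dist_comm]; exact hC T (by linarith)
  have d4 : dist (g s) (g T) = T - s := by
    rw [hg s T hs (by linarith), abs_of_nonpos (by linarith)]; ring
  have d5 : dist (h T) (g 0) = T := by
    rw [h0, dist_comm, hh 0 T le_rfl (by linarith), abs_of_nonpos (by linarith)]; ring
  rw [e1, d1, d2, d4, d5] at hfour
  have hmle : m ≤ -s := by
    rcases le_max_iff.1 hfour with h' | h' <;> linarith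
  have : dist (g s) (h s) = 0 := by
    rw [ray_formula htree hh (g s) s hs, hps, ← hm]
    rw [show s - s = (0:ℝ) by ring]
    rw [max_eq_left (by linarith)]
  exact dist_eq_zero.1 this

variable {g : ℝ → X} (hg : IsRayF g) (x : X)

include htree hgeo hg in
lemma canon_consist : ∀ t, 0 ≤ t → ∀ S S', dist x (g 0) + 1 ≤ S → S ≤ S' →
    t ≤ rayBF x g + S → seg hgeo x (g S) t = seg hgeo x (g S') t := by
  intro t ht S S' hS hSS' htS
  have hS' : dist x (g 0) + 1 ≤ S' := le_trans hS hSS'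
  have hf0 : (0:ℝ) ≤ dist x (g 0) := dist_nonneg
  have e1 : dist x (g S) = rayBF x g + S := rayBF_spec htree hg x S hS
  have e2 : dist x (g S') = rayBF x g + S' := rayBF_spec htree hg x S' hS'
  have hbet : dist x (g S) + dist (g S) (g S') = dist x (g S') := by
    rw [e1, e2, hg S S' (by linarith) (by linarith), abs_of_nonpos (by linarith)]
    ring
  have hspec' := seg_spec hgeo x (g S')
  have hC' : IsGeodFT x (g S) (seg hgeo x (g S')) := by
    refine ⟨hspec'.1, geod_concat htree hgeo hbet hspec', ?_⟩
    intro a ha b hb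
    refine hspec'.2.2 a ⟨ha.1, ?_⟩ b ⟨hb.1, ?_⟩
    · refine le_trans ha.2 ?_
      rw [e1, e2]; linarith
    · refine le_trans hb.2 ?_
      rw [e1, e2]; linarith
  have := geod_unique htree (seg_spec hgeo x (g S)) hC' (s := t) ⟨ht, by rw [e1]; exact htS⟩
  exact this

/-- The canonical ray from `x` asymptotic to the ray `g`. -/
noncomputable def canonF (x : X) (g : ℝ → X) : ℝ → X :=
  fun t => seg hgeo x (g (|t| + |rayBF x g| + dist x (g 0) + 1)) t

include htree hg in
lemma canon_eval : ∀ t, 0 ≤ t → ∀ S, dist x (g 0) + 1 ≤ S → t ≤ rayBF x g + S →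
    canonF hgeo x g t = seg hgeo x (g S) t := by
  intro t ht S hS htS
  have hf0 : (0:ℝ) ≤ dist x (g 0) := dist_nonneg
  have hb : -dist x (g 0) ≤ rayBF x g := neg_le_rayBF hg x
  have habs : rayBF x g + |rayBF x g| ≥ 0 := by
    rcases abs_cases (rayBF x g) with ⟨h1, _⟩ | ⟨h1, _⟩ <;> linarith [le_abs_self (rayBF x g), neg_abs_le (rayBF x g)]
  set S0 := |t| + |rayBF x g| + dist x (g 0) + 1 with hS0
  have hS0R : dist x (g 0) + 1 ≤ S0 := by
    have := abs_nonneg t; have := abs_nonneg (rayBF x g); linarith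
  have htS0 : t ≤ rayBF x g + S0 := by
    have := le_abs_self t; linarith
  set M := max S S0 with hM
  have h1 : seg hgeo x (g S0) t = seg hgeo x (g M) t :=
    canon_consist htree hgeo hg x t ht S0 M hS0R (le_max_right _ _) htS0
  have h2 : seg hgeo x (g S) t = seg hgeo x (g M) t :=
    canon_consist htree hgeo hg x t ht S M hS (le_max_left _ _) htS
  rw [show canonF hgeo x g t = seg hgeo x (g S0) t from rfl, h1, h2]

lemma canon_zero : canonF hgeo x g 0 = x := (seg_spec hgeo x _).1

include htree hg in
lemma canon_isray : IsRayF (canonF hgeo x g) := by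
  intro s t hs ht
  have hf0 : (0:ℝ) ≤ dist x (g 0) := dist_nonneg
  have hb : -dist x (g 0) ≤ rayBF x g := neg_le_rayBF hg x
  have habs : 0 ≤ rayBF x g + |rayBF x g| := by
    rcases abs_cases (rayBF x g) with ⟨h1, _⟩ | ⟨h1, _⟩ <;> linarith
  set S := dist x (g 0) + 1 + |rayBF x g| + s + t with hS
  have hSR : dist x (g 0) + 1 ≤ S := by
    have := abs_nonneg (rayBF x g); linarith
  have e1 := canon_eval htree hgeo hg x s hs S hSR (by linarith)
  have e2 := canon_eval htree hgeo hg x t ht S hSR (by linarith)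
  rw [e1, e2]
  have eL : dist x (g S) = rayBF x g + S := rayBF_spec htree hg x S hSR
  exact (seg_spec hgeo x (g S)).2.2 s ⟨hs, by rw [eL]; linarith⟩ t ⟨ht, by rw [eL]; linarith⟩

include htree hg in
lemma canon_line : ∀ T, dist x (g 0) + 1 ≤ T → canonF hgeo x g (rayBF x g + T) = g T := by
  intro T hT
  have hf0 : (0:ℝ) ≤ dist x (g 0) := dist_nonneg
  have hb : -dist x (g 0) ≤ rayBF x g := neg_le_rayBF hg x
  have hbT : 0 ≤ rayBF x g + T := by linarith
  have e1 := canon_eval htree hgeo hg x (rayBF x g + T) hbT T hT le_rfl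
  have eL : dist x (g T) = rayBF x g + T := rayBF_spec htree hg x T hT
  rw [e1, ← eL]
  exact (seg_spec hgeo x (g T)).2.1

include htree hg in
lemma canon_dist : ∀ t, 0 ≤ t →
    dist (canonF hgeo x g t) (g t) ≤ 3 * dist x (g 0) + 3 * |rayBF x g| + 2 := by
  intro t ht
  have hf0 : (0:ℝ) ≤ dist x (g 0) := dist_nonneg
  have hb : -dist x (g 0) ≤ rayBF x g := neg_le_rayBF hg x
  have hble : rayBF x g ≤ dist x (g 0) := rayBF_le htree hg x
  have hbabs : rayBF x g ≤ |rayBF x g| := le_abs_self _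
  have hbabs2 : -|rayBF x g| ≤ rayBF x g := neg_abs_le _
  set f0 := dist x (g 0) with hf0d
  set b := rayBF x g with hbd
  set t0 := f0 + 1 + |b| with ht0
  rcases le_total t0 t with hcase | hcase
  · have hTb : f0 + 1 ≤ t - b := by linarith
    have : canonF hgeo x g t = g (t - b) := by
      have := canon_line htree hgeo hg x (t - b) hTb
      rw [show b + (t - b) = t by ring] at this
      exact this
    rw [this, hg (t - b) t (by linarith) ht]
    rw [show t - b - t = -b by ring, abs_neg]
    linarith
  · have hd1 : dist (canonF hgeo x g t) x = t := by
      have := canon_isray htree hgeo hg x t 0 ht le_rfl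
      rw [canon_zero] at this
      rw [this, abs_of_nonneg (by linarith)]; ring
    have hd2 : dist x (g t) = max (f0 - t) (b + t) := ray_formula htree hg x t ht
    have := dist_triangle (canonF hgeo x g t) x (g t)
    rw [hd1, hd2] at this
    have hmax : max (f0 - t) (b + t) ≤ f0 + |b| + t0 := by
      apply max_le <;> linarith
    linarith

end AuxCanon
noncomputable section AuxVertex

open Set

variable {X : Type*} [MetricSpace X]
variable (htree : IsZeroHyperbolic X) (hgeo : IsGeodesicSpace X)

def classSet (p z : X) : Set X := {w | w ≠ p ∧ 0 < gpr p z w}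

def classSetC (p z : X) : Set X := {w | w ≠ p ∧ gpr p z w ≤ 0}

include htree in
lemma classSet_open (p z : X) : IsOpen (classSet p z) := by
  rw [Metric.isOpen_iff]
  rintro w ⟨hwp, hgw⟩
  have hdw : 0 < dist p w := dist_pos.2 (Ne.symm hwp)
  refine ⟨min (gpr p z w) (dist p w) / 2, by positivity, ?_⟩
  intro w' hw'
  rw [Metric.mem_ball] at hw'
  have hww' : dist w w' < min (gpr p z w) (dist p w) / 2 := by
    rw [dist_comm]; exact hw'
  have hmin1 : min (gpr p z w) (dist p w) ≤ gpr p z w := min_le_left _ _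
  have hmin2 : min (gpr p z w) (dist p w) ≤ dist p w := min_le_right _ _
  have ht : dist p w ≤ dist p w' + dist w' w := dist_triangle p w' w
  rw [dist_comm w' w] at ht
  have hw'p : 0 < dist p w' := by linarith
  have hgww' : 0 < gpr p w w' := by
    unfold gpr; linarith
  refine ⟨fun h => by rw [h] at hw'p; simp at hw'p, ?_⟩
  exact lt_of_lt_of_le (lt_min hgw hgww') (gpr_min htree p z w w')

include htree in
lemma classSetC_open (p z : X) : IsOpen (classSetC p z) := by
  rw [Metric.isOpen_iff]
  rintro w ⟨hwp, hgw⟩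
  have hdw : 0 < dist p w := dist_pos.2 (Ne.symm hwp)
  refine ⟨dist p w / 2, by positivity, ?_⟩
  intro w' hw'
  rw [Metric.mem_ball] at hw'
  have hww' : dist w w' < dist p w / 2 := by rw [dist_comm]; exact hw'
  have ht : dist p w ≤ dist p w' + dist w w' := by
    have := dist_triangle p w' w; rw [dist_comm w' w] at this; linarith
  have hw'p : 0 < dist p w' := by linarith
  refine ⟨fun h => by rw [h] at hw'p; simp at hw'p, ?_⟩
  by_contra hpos
  push_neg at hpos
  have hgww' : 0 < gpr p w' w := by unfold gpr; linarith
  have := gpr_min htree p z w' w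
  have : 0 < gpr p z w := lt_of_lt_of_le (lt_min hpos hgww') this
  linarith

lemma self_mem_classSet {p z : X} (hz : z ≠ p) : z ∈ classSet p z :=
  ⟨hz, by rw [gpr_self]; have := dist_pos.2 (Ne.symm hz); linarith⟩

lemma seg_sub_classSet {p z w : X} (hw : w ∈ classSet p z) {s : ℝ}
    (hs : s ∈ Set.Icc (0:ℝ) (dist z w)) : seg hgeo z w s ∈ classSet p z := by
  obtain ⟨hwp, hg⟩ := hw
  have hsp := seg_spec hgeo z w
  have e1 : dist z (seg hgeo z w s) = s := hsp.dist_from hs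
  have e2 : dist (seg hgeo z w s) w = dist z w - s := hsp.dist_to hs
  have t1 : dist p z ≤ dist p (seg hgeo z w s) + s := by
    have := dist_triangle p (seg hgeo z w s) z
    rw [dist_comm (seg hgeo z w s) z, e1] at this; linarith
  have t2 : dist p w ≤ dist p (seg hgeo z w s) + (dist z w - s) := by
    have := dist_triangle p (seg hgeo z w s) w
    rw [e2] at this; linarith
  unfold gpr at hg
  constructor
  · intro h
    rw [h, dist_self] at t1 t2
    linarith
  · show 0 < gpr p z (seg hgeo z w s)
    unfold gpr
    linarith

include htree hgeo in
lemma classSet_preconnected (p z : X) (hz : z ≠ p) : IsPreconnected (classSet p z) := by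
  have key : classSet p z =
      ⋃₀ {S | ∃ w ∈ classSet p z, S = seg hgeo z w '' Set.Icc (0:ℝ) (dist z w)} := by
    ext m
    constructor
    · intro hm
      refine ⟨seg hgeo z m '' Set.Icc (0:ℝ) (dist z m), ⟨m, hm, rfl⟩, ?_⟩
      exact ⟨dist z m, ⟨dist_nonneg, le_rfl⟩, (seg_spec hgeo z m).2.1⟩
    · rintro ⟨S, ⟨w, hw, rfl⟩, ⟨s, hs, rfl⟩⟩
      exact seg_sub_classSet hgeo hw hs
  rw [key]
  apply isPreconnected_sUnion z
  · rintro S ⟨w, hw, rfl⟩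
    exact ⟨0, ⟨le_rfl, dist_nonneg⟩, (seg_spec hgeo z w).1⟩
  · rintro S ⟨w, hw, rfl⟩
    apply IsPreconnected.image isPreconnected_Icc
    have hlip : LipschitzOnWith 1 (seg hgeo z w) (Set.Icc (0:ℝ) (dist z w)) := by
      apply LipschitzOnWith.of_dist_le_mul
      intro a ha b hb
      rw [(seg_spec hgeo z w).2.2 a ha b hb, ← Real.dist_eq]
      simp
    exact hlip.continuousOn

include htree hgeo in
lemma component_eq_classSet (p z : X) (hz : z ≠ p) :
    connectedComponentIn ({p}ᶜ : Set X) z = classSet p z := by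
  have hzc : z ∈ ({p}ᶜ : Set X) := by simpa using hz
  apply le_antisymm
  · apply IsPreconnected.subset_left_of_subset_union (classSet_open htree p z)
      (classSetC_open htree p z)
    · rw [Set.disjoint_left]
      rintro a ⟨_, h1⟩ ⟨_, h2⟩
      linarith
    · intro a ha
      have hap : a ≠ p := by
        have := connectedComponentIn_subset ({p}ᶜ : Set X) z ha
        simpa using this
      rcases le_or_gt (gpr p z a) 0 with h | h
      · exact Or.inr ⟨hap, h⟩
      · exact Or.inl ⟨hap, h⟩
    · exact ⟨z, mem_connectedComponentIn hzc, self_mem_classSet hz⟩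
    · exact isPreconnected_connectedComponentIn
  · exact (classSet_preconnected htree hgeo p z hz).subset_connectedComponentIn
      (self_mem_classSet hz) (fun a ha => by simpa using ha.1)

include htree hgeo in
lemma isVertex_of_three (p u v w : X) (hu : u ≠ p) (hv : v ≠ p) (hw : w ≠ p)
    (huv : gpr p u v ≤ 0) (huw : gpr p u w ≤ 0) (hvw : gpr p v w ≤ 0) :
    IsVertex p := by
  set Cu := connectedComponentIn ({p}ᶜ : Set X) u with hCu
  set Cv := connectedComponentIn ({p}ᶜ : Set X) v with hCv
  set Cw := connectedComponentIn ({p}ᶜ : Set X) w with hCw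
  have hmem : ∀ a : X, a ≠ p → connectedComponentIn ({p}ᶜ : Set X) a ∈ complComponents p :=
    fun a ha => ⟨a, ha, rfl⟩
  have keydistinct : ∀ a b : X, a ≠ p → b ≠ p → gpr p a b ≤ 0 →
      connectedComponentIn ({p}ᶜ : Set X) a ≠ connectedComponentIn ({p}ᶜ : Set X) b := by
    intro a b ha hb hab heq
    have hbmem : b ∈ connectedComponentIn ({p}ᶜ : Set X) a := by
      rw [heq]; exact mem_connectedComponentIn (by simpa using hb)
    rw [component_eq_classSet htree hgeo p a ha] at hbmem
    exact absurd hbmem.2 (not_lt.2 hab)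
  have h12 : Cu ≠ Cv := keydistinct u v hu hv huv
  have h13 : Cu ≠ Cw := keydistinct u w hu hw huw
  have h23 : Cv ≠ Cw := keydistinct v w hv hw hvw
  have hsub : ({Cu, Cv, Cw} : Set (Set X)) ⊆ complComponents p := by
    rintro C (rfl | rfl | rfl)
    · exact hmem u hu
    · exact hmem v hv
    · exact hmem w hw
  intro h2
  by_cases hfin : (complComponents p).Finite
  case pos =>
    have hcard : ({Cu, Cv, Cw} : Set (Set X)).ncard = 3 := by
      rw [Set.ncard_insert_of_notMem (by simp [h12, h13]) (Set.toFinite _),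
        Set.ncard_pair h23]
    have hle := Set.ncard_le_ncard hsub hfin
    rw [hcard, h2] at hle
    omega
  case neg =>
    rw [Set.Infinite.ncard hfin] at h2
    exact absurd h2 (by norm_num)

end AuxVertex
noncomputable section AuxFuture

open Set

variable {X : Type*} [MetricSpace X]
variable (htree : IsZeroHyperbolic X) (hgeo : IsGeodesicSpace X)

lemma ray_rayF (δ : GeodesicRay X) : IsRayF δ.1 := δ.2

noncomputable def canonRay (x : X) (δ : GeodesicRay X) : GeodesicRay X :=
  ⟨canonF hgeo x δ.1, canon_isray htree hgeo (ray_rayF δ) x⟩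

lemma canonRay_zero (x : X) (δ : GeodesicRay X) : (canonRay htree hgeo x δ).1 0 = x :=
  canon_zero hgeo x

lemma canonRay_mk (x : X) (δ : GeodesicRay X) :
    boundaryMk (canonRay htree hgeo x δ) = boundaryMk δ :=
  Quotient.sound ⟨3 * dist x (δ.1 0) + 3 * |rayBF x δ.1| + 2,
    fun t ht => canon_dist htree hgeo (ray_rayF δ) x t ht⟩

include htree in
lemma asymp_eq_of_same_origin {δ δ' : GeodesicRay X} (h0 : δ.1 0 = δ'.1 0)
    (h : boundaryMk δ = boundaryMk δ') : ∀ t, 0 ≤ t → δ.1 t = δ'.1 t := by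
  obtain ⟨C, hC⟩ := Quotient.exact h
  exact ray_unique_origin htree (ray_rayF δ) (ray_rayF δ') h0 hC

include htree hgeo in
lemma mem_future_iff (x y : X) (δ : GeodesicRay X) :
    boundaryMk δ ∈ future x y ↔ rayBF y δ.1 = rayBF x δ.1 - dist x y := by
  set d := dist x y with hd
  have hd0 : 0 ≤ d := dist_nonneg
  constructor
  · rintro ⟨β, hβ0, hβmk, hβd⟩
    obtain ⟨C, hC⟩ := Quotient.exact hβmk
    have hC0 : 0 ≤ C := le_trans dist_nonneg (hC 0 le_rfl)
    set bx := rayBF x δ.1 with hbx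
    set by' := rayBF y δ.1 with hby'
    set T := max (dist x (δ.1 0) + 1) (dist y (δ.1 0) + 1) with hT
    -- lower bound
    have f1T : dist x (δ.1 T) = bx + T := rayBF_spec htree (ray_rayF δ) x T (le_max_left _ _)
    have f2T : dist y (δ.1 T) = by' + T := rayBF_spec htree (ray_rayF δ) y T (le_max_right _ _)
    have hlow : bx - d ≤ by' := by
      have := dist_triangle x y (δ.1 T)
      rw [f1T, f2T] at this; linarith
    set s := max d ((d + C - by') / 2 + 1) with hs
    have hsd : d ≤ s := le_max_left _ _
    have hs2 : (d + C - by') / 2 + 1 ≤ s := le_max_right _ _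
    have hs0 : 0 ≤ s := le_trans hd0 hsd
    set S := max T s with hS
    have hST : T ≤ S := le_max_left _ _
    have hSs : s ≤ S := le_max_right _ _
    have f1 : dist x (δ.1 S) = bx + S :=
      rayBF_spec htree (ray_rayF δ) x S (le_trans (le_max_left _ _) hST)
    have f2 : dist y (δ.1 S) = by' + S :=
      rayBF_spec htree (ray_rayF δ) y S (le_trans (le_max_right _ _) hST)
    have f3 : dist y (β.1 s) = s - d := by
      rw [← hβd, β.2 (dist x y) s (by rw [← hd]; exact hd0) hs0, ← hd,
        abs_of_nonpos (by linarith)]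
      ring
    have f4 : dist (β.1 s) x = s := by
      rw [← hβ0, β.2 s 0 hs0 le_rfl, abs_of_nonneg (by linarith)]
      ring
    have f5 : dist (δ.1 S) (β.1 s) ≤ (S - s) + C := by
      have t1 := dist_triangle (δ.1 S) (δ.1 s) (β.1 s)
      have t2 : dist (δ.1 S) (δ.1 s) = S - s := by
        rw [δ.2 S s (le_trans hs0 hSs) hs0, abs_of_nonneg (by linarith)]
      have t3 : dist (δ.1 s) (β.1 s) ≤ C := by
        rw [dist_comm]; exact hC s hs0
      linarith
    have hfour := htree y (δ.1 S) (β.1 s) x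
    rw [f2, f4, f3] at hfour
    rw [dist_comm (δ.1 S) x, f1, dist_comm y x, ← hd] at hfour
    have hup : by' ≤ bx - d := by
      rcases le_max_iff.1 hfour with h' | h'
      · linarith
      · exfalso; linarith
    linarith
  · intro hby
    set β := canonRay htree hgeo x δ with hβ
    refine ⟨β, canonRay_zero htree hgeo x δ, canonRay_mk htree hgeo x δ, ?_⟩
    set bx := rayBF x δ.1 with hbx
    set S := max (dist x (δ.1 0) + 1) (dist y (δ.1 0) + 1) with hS
    have f1 : dist x (δ.1 S) = bx + S := rayBF_spec htree (ray_rayF δ) x S (le_max_left _ _)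
    have f2 : dist y (δ.1 S) = rayBF y δ.1 + S :=
      rayBF_spec htree (ray_rayF δ) y S (le_max_right _ _)
    have hyS : (0:ℝ) ≤ dist y (δ.1 S) := dist_nonneg
    have hdS : d ≤ bx + S := by
      rw [hby] at f2; linarith
    have heval : β.1 d = seg hgeo x (δ.1 S) d :=
      canon_eval htree hgeo (ray_rayF δ) x d hd0 S (le_max_left _ _) hdS
    have hbet : dist x y + dist y (δ.1 S) = dist x (δ.1 S) := by
      rw [f1, f2, hby, ← hd]; ring
    have hgc := geod_concat htree hgeo hbet (seg_spec hgeo x (δ.1 S))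
    rw [← hd] at hgc
    show β.1 d = y
    rw [heval]
    exact hgc

include htree hgeo in
lemma endTop_mem_future_iff (x y : X) (γ : GeodesicLine X) :
    endTop γ ∈ future x y ↔ lineB y γ = lineB x γ - dist x y :=
  mem_future_iff htree hgeo x y (posRay γ)

include htree hgeo in
lemma endBot_mem_future_iff (x y : X) (γ : GeodesicLine X) :
    endBot γ ∈ future x y ↔ lineA y γ = lineA x γ - dist x y :=
  mem_future_iff htree hgeo x y (negRay γ)

include htree hgeo in
lemma traverses_iff {x y : X} (hedge : IsOrientedEdge x y) (γ : GeodesicLine X) :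
    Traverses γ x y ↔
      (lineB y γ = lineB x γ - dist x y ∧ lineA y γ ≠ lineA x γ - dist x y) := by
  obtain ⟨hxy, hvx, hvy, hmid⟩ := hedge
  set d := dist x y with hd
  have hd0 : 0 < d := dist_pos.2 hxy
  constructor
  · rintro ⟨t, h1, h2⟩
    obtain ⟨e1, e2⟩ := line_through htree x γ t h1
    obtain ⟨e3, e4⟩ := line_through htree y γ (t + d) h2
    rw [e1, e2, e3, e4]
    constructor
    · ring
    · intro h; linarith
  · rintro ⟨hB, hA⟩
    set Ax := lineA x γ with hAx
    set Bx := lineB x γ with hBx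
    set Ay := lineA y γ with hAy
    set By := lineB y γ with hBy
    have hqx : 0 ≤ Ax + Bx := lineAB_nonneg htree x γ
    have hqy : 0 ≤ Ay + By := lineAB_nonneg htree y γ
    have htri1 : Ay - Ax ≤ d := by
      have := lineA_sub_le htree y x γ; rw [dist_comm y x, ← hd] at this; linarith
    have htri2 : Ax - Ay ≤ d := by
      have := lineA_sub_le htree x y γ; rw [← hd] at this; linarith
    have hcross : Bx + Ay ≤ max d (Ax + By) := line_cross htree x y γ
    have he : Ay - Ax - d = -(Ax + Bx) := by
      rcases le_max_iff.1 hcross with h' | h'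
      · have h1 : Ay - Ax - d ≤ -(Ax + Bx) := by linarith
        have h2 : -(Ax + Bx) ≤ Ay - Ax - d := by
          rw [hB] at hqy; linarith
        linarith
      · exfalso
        rw [hB] at h'
        have h1 : Ay ≤ Ax - d := by linarith
        have h2 : Ay = Ax - d := by linarith
        exact hA h2
    have hqy0 : Ay + By = 0 := by rw [hB]; linarith
    have hyon : γ.1 Ay = y := line_at htree y γ hqy0
    rcases eq_or_lt_of_le hqx with hqx0 | hqx0
    · -- x is on the line, traverse
      refine ⟨Ax, line_at htree x γ hqx0.symm, ?_⟩
      have : Ay = Ax + d := by linarith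
      rw [← hd, ← this]
      exact hyon
    · -- x is off the line : contradiction with no vertex between
      exfalso
      set ρ := (Ax + Bx) / 2 with hρ
      have hρ0 : 0 < ρ := by positivity
      have hρd : ρ < d := by
        have hle : ρ ≤ d := by linarith
        rcases eq_or_lt_of_le hle with heq | hlt
        · exfalso
          apply hA
          show Ay = Ax - d
          linarith
        · exact hlt
      set p := γ.1 (Ax - ρ) with hp
      have hdxp : dist x p = ρ := by
        rw [hp, line_formula htree x γ (Ax - ρ), ← hAx, ← hBx,
          show Ax - (Ax - ρ) = ρ by ring, show Bx + (Ax - ρ) = ρ by rw [hρ]; ring,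
          max_self]
      have hdpy : dist p y = d - ρ := by
        rw [hp, ← hyon, line_dist γ, show Ax - ρ - Ay = -(d - ρ) by linarith, abs_neg,
          abs_of_nonneg (by linarith)]
      have hbet : dist x p + dist p y = dist x y := by
        rw [hdxp, hdpy, ← hd]; ring
      have hpx : p ≠ x := by
        intro h
        rw [h, dist_self] at hdxp
        linarith
      have hpy : p ≠ y := by
        intro h
        rw [h, dist_self] at hdpy
        linarith
      rcases hmid p hbet with h' | h' | h'
      · exact hpx h'
      · exact hpy h'
      · apply h'
        -- p is a vertex : three directions
        set u := γ.1 (Ax - ρ - 1) with hu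
        set v := γ.1 (Ax - ρ + 1) with hv
        have hdxu : dist x u = ρ + 1 := by
          rw [hu, line_formula htree x γ (Ax - ρ - 1), ← hAx, ← hBx,
            show Ax - (Ax - ρ - 1) = ρ + 1 by ring,
            show Bx + (Ax - ρ - 1) = ρ - 1 by rw [hρ]; ring]
          rw [max_eq_left (by linarith)]
        have hdxv : dist x v = ρ + 1 := by
          rw [hv, line_formula htree x γ (Ax - ρ + 1), ← hAx, ← hBx,
            show Ax - (Ax - ρ + 1) = ρ - 1 by ring,
            show Bx + (Ax - ρ + 1) = ρ + 1 by rw [hρ]; ring]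
          rw [max_eq_right (by linarith)]
        have hdpu : dist p u = 1 := by
          rw [hp, hu, line_dist γ]
          norm_num
        have hdpv : dist p v = 1 := by
          rw [hp, hv, line_dist γ]
          norm_num
        have hdut : dist u v = 2 := by
          rw [hu, hv, line_dist γ, show Ax - ρ - 1 - (Ax - ρ + 1) = -2 by ring, abs_neg,
            abs_of_nonneg (by norm_num)]
        have hup : u ≠ p := by
          intro h; rw [← h, dist_self] at hdpu
          · norm_num at hdpu
        have hvp : v ≠ p := by
          intro h; rw [← h, dist_self] at hdpv
          · norm_num at hdpv
        have hxp2 : x ≠ p := Ne.symm hpx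
        apply isVertex_of_three htree hgeo p x u v hxp2 hup hvp
        · show gpr p x u ≤ 0
          unfold gpr
          rw [dist_comm p x, hdxp, hdpu, hdxu]
          linarith
        · show gpr p x v ≤ 0
          unfold gpr
          rw [dist_comm p x, hdxp, hdpv, hdxv]
          linarith
        · show gpr p u v ≤ 0
          unfold gpr
          rw [hdpu, hdpv, hdut]
          linarith

def revLine (γ : GeodesicLine X) : GeodesicLine X :=
  ⟨fun t => γ.1 (-t), γ.2.comp isometry_neg⟩

lemma lineB_rev (p : X) (γ : GeodesicLine X) : lineB p (revLine γ) = lineA p γ := rfl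

lemma lineA_rev (p : X) (γ : GeodesicLine X) : lineA p (revLine γ) = lineB p γ := by
  unfold lineA lineB revLine rayBF
  simp [neg_neg, neg_zero]

lemma traverses_rev (x y : X) (γ : GeodesicLine X) :
    Traverses (revLine γ) x y ↔ Traverses γ y x := by
  constructor
  · rintro ⟨t, h1, h2⟩
    refine ⟨-t - dist x y, ?_, ?_⟩
    · show γ.1 (-t - dist x y) = y
      rw [show -t - dist x y = -(t + dist x y) by ring]
      exact h2
    · show γ.1 (-t - dist x y + dist y x) = x
      rw [dist_comm y x, show -t - dist x y + dist x y = -t by ring]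
      exact h1
  · rintro ⟨s, h1, h2⟩
    refine ⟨-s - dist y x, ?_, ?_⟩
    · show γ.1 (-(-s - dist y x)) = x
      rw [show -(-s - dist y x) = s + dist y x by ring]
      exact h2
    · show γ.1 (-(-s - dist y x + dist x y)) = y
      rw [dist_comm x y, show -(-s - dist y x + dist y x) = s by ring]
      exact h1

end AuxFuture
noncomputable section AuxCont

open Set

variable {X : Type*} [MetricSpace X]
variable (htree : IsZeroHyperbolic X) (hgeo : IsGeodesicSpace X)

lemma continuous_eval_ray (T : ℝ) : Continuous fun δ : GeodesicRay X => δ.1 T :=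
  (continuous_apply T).comp continuous_subtype_val

include htree in
lemma continuous_rayBF (p : X) : Continuous fun δ : GeodesicRay X => rayBF p δ.1 := by
  rw [continuous_iff_continuousAt]
  intro δ0
  set n := dist p (δ0.1 0) + 2 with hn
  have hcont : Continuous fun δ : GeodesicRay X => dist p (δ.1 n) - n :=
    (continuous_const.dist (continuous_eval_ray n)).sub continuous_const
  have hU : IsOpen {δ : GeodesicRay X | dist p (δ.1 0) < n - 1} :=
    isOpen_lt (continuous_const.dist (continuous_eval_ray 0)) continuous_const
  have hmem : δ0 ∈ {δ : GeodesicRay X | dist p (δ.1 0) < n - 1} := by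
    simp only [Set.mem_setOf_eq, hn]; linarith
  have heq : ∀ δ ∈ {δ : GeodesicRay X | dist p (δ.1 0) < n - 1},
      (fun δ : GeodesicRay X => dist p (δ.1 n) - n) δ = rayBF p δ.1 := by
    intro δ hδ
    have := rayBF_spec htree (ray_rayF δ) p n (by simp only [Set.mem_setOf_eq] at hδ; linarith)
    simp only [this]; ring
  exact (hcont.continuousAt).congr
    (Filter.eventuallyEq_of_mem (hU.mem_nhds hmem) heq)

lemma continuous_posRay : Continuous (posRay : GeodesicLine X → GeodesicRay X) := by
  apply continuous_induced_rng.2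
  exact continuous_pi fun t => (continuous_apply t).comp continuous_subtype_val

lemma continuous_negRay : Continuous (negRay : GeodesicLine X → GeodesicRay X) := by
  apply continuous_induced_rng.2
  exact continuous_pi fun t => (continuous_apply (-t)).comp continuous_subtype_val

include htree in
lemma continuous_lineB (p : X) : Continuous fun γ : GeodesicLine X => lineB p γ :=
  (continuous_rayBF htree p).comp continuous_posRay

include htree in
lemma continuous_lineA (p : X) : Continuous fun γ : GeodesicLine X => lineA p γ :=
  (continuous_rayBF htree p).comp continuous_negRay

lemma quotientMap_boundaryMk :
    Topology.IsQuotientMap (boundaryMk : GeodesicRay X → Boundary X) :=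
  isQuotientMap_quot_mk

lemma continuous_endTop : Continuous (endTop : GeodesicLine X → Boundary X) :=
  (quotientMap_boundaryMk).continuous.comp continuous_posRay

lemma continuous_endBot : Continuous (endBot : GeodesicLine X → Boundary X) :=
  (quotientMap_boundaryMk).continuous.comp continuous_negRay

include htree hgeo in
lemma isClosed_future (x y : X) : IsClosed (future x y : Set (Boundary X)) := by
  rw [← quotientMap_boundaryMk.isClosed_preimage]
  have hpre : boundaryMk ⁻¹' (future x y : Set (Boundary X)) =
      {δ : GeodesicRay X | rayBF y δ.1 = rayBF x δ.1 - dist x y} := by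
    ext δ
    exact mem_future_iff htree hgeo x y δ
  rw [hpre]
  exact isClosed_eq (continuous_rayBF htree y)
    ((continuous_rayBF htree x).sub continuous_const)

include htree hgeo in
lemma mem_dirBoundary_canon (x : X) {C : Set X} (hC : C ∈ complComponents x)
    (δ : GeodesicRay X) :
    boundaryMk δ ∈ dirBoundary x C ↔ (canonRay htree hgeo x δ).1 1 ∈ C := by
  set β := canonRay htree hgeo x δ with hβ
  have hβ0 : β.1 0 = x := canonRay_zero htree hgeo x δ
  have hβmk : boundaryMk β = boundaryMk δ := canonRay_mk htree hgeo x δ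
  have hβx : ∀ t : ℝ, 0 < t → β.1 t ≠ x := by
    intro t ht h
    have h2 := β.2 t 0 (le_of_lt ht) le_rfl
    rw [h, hβ0, dist_self, abs_of_nonneg (by linarith)] at h2
    linarith
  constructor
  · rintro ⟨γ', hγ'0, hγ'mk, hγ'mem⟩
    have hmk : boundaryMk γ' = boundaryMk β := by rw [hγ'mk, ← hβmk]
    have h0 : γ'.1 0 = β.1 0 := by rw [hγ'0, hβ0]
    have heq := asymp_eq_of_same_origin htree h0 hmk 1 zero_le_one
    rw [← heq]
    exact hγ'mem 1 one_pos
  · intro h1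
    have hlip : LipschitzOnWith 1 β.1 (Set.Ici (0:ℝ)) := by
      apply LipschitzOnWith.of_dist_le_mul
      intro a ha b hb
      rw [β.2 a b ha hb, ← Real.dist_eq]
      simp
    have hconn : IsPreconnected (β.1 '' Set.Ioi (0:ℝ)) :=
      isPreconnected_Ioi.image _ (hlip.continuousOn.mono (fun a ha => Set.mem_Ici.2 (le_of_lt (Set.mem_Ioi.1 ha))))
    have hsub : β.1 '' Set.Ioi (0:ℝ) ⊆ ({x}ᶜ : Set X) := by
      rintro _ ⟨t, ht, rfl⟩
      simpa using hβx t ht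
    have hmem1 : β.1 1 ∈ β.1 '' Set.Ioi (0:ℝ) := ⟨1, Set.mem_Ioi.2 one_pos, rfl⟩
    have hsubC : β.1 '' Set.Ioi (0:ℝ) ⊆ C := by
      obtain ⟨z, hz, rfl⟩ := hC
      have hs := hconn.subset_connectedComponentIn hmem1 hsub
      rwa [← connectedComponentIn_eq h1] at hs
    exact ⟨β, hβ0, hβmk, fun t ht => hsubC ⟨t, ht, rfl⟩⟩

include htree hgeo in
lemma mem_dirBoundary_iff (x z : X) (hz : z ≠ x) (δ : GeodesicRay X) :
    boundaryMk δ ∈ dirBoundary x (connectedComponentIn ({x}ᶜ : Set X) z) ↔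
      0 < dist x z + rayBF x δ.1 - rayBF z δ.1 := by
  have hC : connectedComponentIn ({x}ᶜ : Set X) z ∈ complComponents x := ⟨z, hz, rfl⟩
  rw [mem_dirBoundary_canon htree hgeo x hC δ, component_eq_classSet htree hgeo x z hz]
  set β := canonRay htree hgeo x δ with hβ
  have hβ0 : β.1 0 = x := canonRay_zero htree hgeo x δ
  have hd1 : dist x (β.1 1) = 1 := by
    rw [← hβ0, dist_comm, β.2 1 0 zero_le_one le_rfl]
    norm_num
  have hβ1x : β.1 1 ≠ x := by
    intro h; rw [h, dist_self] at hd1; norm_num at hd1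
  set bx := rayBF x δ.1 with hbx
  set bz := rayBF z δ.1 with hbz
  set T := max (max (dist x (δ.1 0) + 1) (dist z (δ.1 0) + 1)) (2 + |bx|) with hT
  have hTx : dist x (δ.1 0) + 1 ≤ T := le_trans (le_max_left _ _) (le_max_left _ _)
  have hTz : dist z (δ.1 0) + 1 ≤ T := le_trans (le_max_right _ _) (le_max_left _ _)
  have hT2 : 2 + |bx| ≤ T := le_max_right _ _
  have e1 : dist x (δ.1 T) = bx + T := rayBF_spec htree (ray_rayF δ) x T hTx
  have e2 : dist z (δ.1 T) = bz + T := rayBF_spec htree (ray_rayF δ) z T hTz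
  have hbxT : 1 ≤ bx + T := by
    have := neg_abs_le bx; linarith
  have eβ : β.1 (bx + T) = δ.1 T := canon_line htree hgeo (ray_rayF δ) x T hTx
  have e3 : dist (β.1 1) (δ.1 T) = bx + T - 1 := by
    rw [← eβ, β.2 1 (bx + T) zero_le_one (by linarith), abs_of_nonpos (by linarith)]
    ring
  have g1 : gpr x (β.1 1) (δ.1 T) = 2 := by
    unfold gpr; rw [hd1, e1, e3]; ring
  have g2 : gpr x z (δ.1 T) = dist x z + bx - bz := by
    unfold gpr; rw [e1, e2]; ring
  constructor
  · rintro ⟨-, hpos⟩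
    have hm := gpr_min htree x z (β.1 1) (δ.1 T)
    rw [g1, g2] at hm
    exact lt_of_lt_of_le (lt_min hpos (by norm_num)) hm
  · intro hpos
    refine ⟨hβ1x, ?_⟩
    have hm := gpr_min htree x z (δ.1 T) (β.1 1)
    have hcomm : gpr x (δ.1 T) (β.1 1) = 2 := by rw [gpr_comm]; exact g1
    rw [g2, hcomm] at hm
    exact lt_of_lt_of_le (lt_min hpos (by norm_num)) hm

include htree hgeo in
lemma isOpen_dirBoundary (x : X) {C : Set X} (hC : C ∈ complComponents x) :
    IsOpen (dirBoundary x C : Set (Boundary X)) := by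
  obtain ⟨z, hz, rfl⟩ := hC
  rw [← quotientMap_boundaryMk.isOpen_preimage]
  have hpre : boundaryMk ⁻¹' (dirBoundary x (connectedComponentIn ({x}ᶜ : Set X) z)) =
      {δ : GeodesicRay X | 0 < dist x z + rayBF x δ.1 - rayBF z δ.1} := by
    ext δ; exact mem_dirBoundary_iff htree hgeo x z hz δ
  rw [hpre]
  exact isOpen_lt continuous_const
    ((continuous_const.add (continuous_rayBF htree x)).sub (continuous_rayBF htree z))

include htree in
lemma dirBoundary_disjoint (x : X) {C C' : Set X} (hC : C ∈ complComponents x)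
    (hC' : C' ∈ complComponents x) (hne : C ≠ C') :
    Disjoint (dirBoundary x C) (dirBoundary x C') := by
  rw [Set.disjoint_left]
  rintro ξ ⟨γ1, h10, h1mk, h1mem⟩ ⟨γ2, h20, h2mk, h2mem⟩
  have hmk : boundaryMk γ1 = boundaryMk γ2 := by rw [h1mk, h2mk]
  have h0 : γ1.1 0 = γ2.1 0 := by rw [h10, h20]
  have heq := asymp_eq_of_same_origin htree h0 hmk 1 zero_le_one
  obtain ⟨z, hz, rfl⟩ := hC
  obtain ⟨z', hz', rfl⟩ := hC'
  apply hne
  have m1 : γ1.1 1 ∈ connectedComponentIn ({x}ᶜ : Set X) z := h1mem 1 one_pos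
  have m2 : γ1.1 1 ∈ connectedComponentIn ({x}ᶜ : Set X) z' := by
    rw [heq]; exact h2mem 1 one_pos
  rw [connectedComponentIn_eq m1, connectedComponentIn_eq m2]

include htree hgeo in
lemma passes_of_ends (x : X) {C : Set X} (hC : C ∈ complComponents x) (γ : GeodesicLine X)
    (hT : endTop γ ∈ dirBoundary x C) (hB : endBot γ ∉ dirBoundary x C) :
    lineA x γ + lineB x γ = 0 := by
  by_contra hsum
  have hnn := lineAB_nonneg htree x γ
  set Ax := lineA x γ with hAx
  set Bx := lineB x γ with hBx
  set ρ := (Ax + Bx) / 2 with hρ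
  have hρ0 : 0 < ρ := by
    rcases lt_or_eq_of_le hnn with h | h
    · positivity
    · exact absurd h.symm hsum
  set p := γ.1 (Ax - ρ) with hp
  have hdxp : dist x p = ρ := by
    rw [hp, line_formula htree x γ (Ax - ρ), ← hAx, ← hBx,
      show Ax - (Ax - ρ) = ρ by ring, show Bx + (Ax - ρ) = ρ by rw [hρ]; ring, max_self]
  set δp := posRay γ with hδp
  set δn := negRay γ with hδn
  set βp := canonRay htree hgeo x δp with hβp
  set βn := canonRay htree hgeo x δn with hβn
  have hBp : rayBF x δp.1 = Bx := rfl
  have hAn : rayBF x δn.1 = Ax := rfl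
  -- βp passes through p at time ρ
  have hβpρ : βp.1 ρ = p := by
    set S := max (max (dist x (γ.1 0) + 1) (Ax - ρ)) (ρ - Bx) with hS
    have hS1 : dist x (γ.1 0) + 1 ≤ S := le_trans (le_max_left _ _) (le_max_left _ _)
    have hS2 : Ax - ρ ≤ S := le_trans (le_max_right _ _) (le_max_left _ _)
    have hS3 : ρ - Bx ≤ S := le_max_right _ _
    have hev : βp.1 ρ = seg hgeo x (δp.1 S) ρ :=
      canon_eval htree hgeo (ray_rayF δp) x ρ (le_of_lt hρ0) S hS1
        (by rw [hBp]; linarith)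
    have hd1 : dist p (γ.1 S) = S - (Ax - ρ) := by
      rw [hp, line_dist γ, abs_of_nonpos (by linarith)]
      ring
    have hd2 : dist x (γ.1 S) = Bx + S := lineB_spec htree x γ S hS1
    have hbet : dist x p + dist p (δp.1 S) = dist x (δp.1 S) := by
      show dist x p + dist p (γ.1 S) = dist x (γ.1 S)
      rw [hdxp, hd1, hd2, hρ]; ring
    have hcc := geod_concat htree hgeo hbet (seg_spec hgeo x (δp.1 S))
    rw [hdxp] at hcc
    rw [hev, hcc]
  -- βn passes through p at time ρ
  have hβnρ : βn.1 ρ = p := by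
    set S := max (dist x (γ.1 0) + 1) (ρ - Ax) with hS
    have hS1 : dist x (γ.1 0) + 1 ≤ S := le_max_left _ _
    have hS2 : ρ - Ax ≤ S := le_max_right _ _
    have hev : βn.1 ρ = seg hgeo x (δn.1 S) ρ :=
      canon_eval htree hgeo (ray_rayF δn) x ρ (le_of_lt hρ0) S
        (by show dist x (γ.1 (-0)) + 1 ≤ S; rw [neg_zero]; exact hS1)
        (by rw [hAn]; linarith)
    have hd1 : dist p (γ.1 (-S)) = Ax - ρ + S := by
      rw [hp, line_dist γ, abs_of_nonneg (by linarith)]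
      ring
    have hd2 : dist x (γ.1 (-S)) = Ax + S := lineA_spec htree x γ S hS1
    have hbet : dist x p + dist p (δn.1 S) = dist x (δn.1 S) := by
      show dist x p + dist p (γ.1 (-S)) = dist x (γ.1 (-S))
      rw [hdxp, hd1, hd2]; ring
    have hcc := geod_concat htree hgeo hbet (seg_spec hgeo x (δn.1 S))
    rw [hdxp] at hcc
    rw [hev, hcc]
  -- positions at time 1
  have hβp0 : βp.1 0 = x := canonRay_zero htree hgeo x δp
  have hβn0 : βn.1 0 = x := canonRay_zero htree hgeo x δn
  have hdp1 : dist x (βp.1 1) = 1 := by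
    rw [← hβp0, dist_comm, βp.2 1 0 zero_le_one le_rfl]; norm_num
  have hdn1 : dist x (βn.1 1) = 1 := by
    rw [← hβn0, dist_comm, βn.2 1 0 zero_le_one le_rfl]; norm_num
  have hβp1x : βp.1 1 ≠ x := by intro h; rw [h, dist_self] at hdp1; norm_num at hdp1
  have hβn1x : βn.1 1 ≠ x := by intro h; rw [h, dist_self] at hdn1; norm_num at hdn1
  -- Gromov products
  have hg1 : 0 < gpr x (βp.1 1) p := by
    unfold gpr
    rw [hdp1, hdxp, ← hβpρ, βp.2 1 ρ zero_le_one (le_of_lt hρ0)]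
    rcases abs_cases (1 - ρ) with ⟨h1, _⟩ | ⟨h1, _⟩ <;> rw [h1] <;> linarith
  have hg2 : 0 < gpr x p (βn.1 1) := by
    unfold gpr
    rw [hdn1, hdxp, ← hβnρ, dist_comm (βn.1 ρ) (βn.1 1), βn.2 1 ρ zero_le_one (le_of_lt hρ0)]
    rcases abs_cases (1 - ρ) with ⟨h1, _⟩ | ⟨h1, _⟩ <;> rw [h1] <;> linarith
  -- βp.1 1 ∈ C
  have hTmem : βp.1 1 ∈ C := (mem_dirBoundary_canon htree hgeo x hC δp).1 hT
  -- C as a class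
  obtain ⟨z, hz, hCz⟩ := hC
  have hCeq : C = classSet x (βp.1 1) := by
    rw [hCz, connectedComponentIn_eq (show βp.1 1 ∈ connectedComponentIn ({x}ᶜ : Set X) z
      from hCz ▸ hTmem)]
    exact component_eq_classSet htree hgeo x (βp.1 1) hβp1x
  -- conclude βn.1 1 ∈ C
  have hgmin := gpr_min htree x (βp.1 1) p (βn.1 1)
  have hBmem : βn.1 1 ∈ C := by
    rw [hCeq]
    exact ⟨hβn1x, lt_of_lt_of_le (lt_min hg1 hg2) hgmin⟩
  exact hB ((mem_dirBoundary_canon htree hgeo x ⟨z, hz, hCz⟩ δn).2 hBmem)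

end AuxCont
open MeasureTheory in
/-- If `μ` is a probability measure on geodesic lines with ends
`ν₋, ν₊`, then `φ(xy) = μ(xy) - μ(yx)` for every oriented edge `(x,y)`, and
`μ(x) ≥ φ(x)` for every vertex `x`. -/
theorem edge_flow_eq_meas_difference_and_vertex_bound {X : Type*} [MetricSpace X] [CompleteSpace X] [LocallyCompactSpace X]
    [MeasurableSpace X] [BorelSpace X]
    (hgeo : IsGeodesicSpace X) (htree : IsZeroHyperbolic X) (x₀ : X)
    (νneg νpos : MeasureTheory.Measure (Boundary X))
    [MeasureTheory.IsProbabilityMeasure νneg] [MeasureTheory.IsProbabilityMeasure νpos]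
    (hant : AntipodalMeasures νneg νpos)
    (μ : Measure (GeodesicLine X)) [IsProbabilityMeasure μ]
    (hends₁ : μ.map endBot = νneg) (hends₂ : μ.map endTop = νpos) :
    (∀ x y : X, IsOrientedEdge x y →
        edgeFlow νneg νpos x y
          = (μ {γ | Traverses γ x y}).toReal - (μ {γ | Traverses γ y x}).toReal) ∧
    ∀ x : X, IsVertex x →
      vertexFlow νneg νpos x ≤ (μ {γ | ∃ t : ℝ, γ.1 t = x}).toReal := by
  have mTop : Measurable (endTop : GeodesicLine X → Boundary X) :=
    continuous_endTop.measurable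
  have mBot : Measurable (endBot : GeodesicLine X → Boundary X) :=
    continuous_endBot.measurable
  constructor
  · -- Part 1 : the edge formula
    intro x y hedge
    set S1 : Set (GeodesicLine X) := {γ | lineB y γ = lineB x γ - dist x y} with hS1
    set S2 : Set (GeodesicLine X) := {γ | lineA y γ = lineA x γ - dist x y} with hS2
    have mS1 : MeasurableSet S1 :=
      (isClosed_eq (continuous_lineB htree y)
        ((continuous_lineB htree x).sub continuous_const)).measurableSet
    have mS2 : MeasurableSet S2 :=
      (isClosed_eq (continuous_lineA htree y)
        ((continuous_lineA htree x).sub continuous_const)).measurableSet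
    have hFmeas : MeasurableSet (future x y : Set (Boundary X)) :=
      (isClosed_future htree hgeo x y).measurableSet
    have hpreTop : (endTop : GeodesicLine X → Boundary X) ⁻¹' (future x y) = S1 := by
      ext γ
      simp only [Set.mem_preimage, hS1, Set.mem_setOf_eq]
      exact endTop_mem_future_iff htree hgeo x y γ
    have hpreBot : (endBot : GeodesicLine X → Boundary X) ⁻¹' (future x y) = S2 := by
      ext γ
      simp only [Set.mem_preimage, hS2, Set.mem_setOf_eq]
      exact endBot_mem_future_iff htree hgeo x y γ
    have hpos : νpos (future x y) = μ S1 := by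
      rw [← hends₂, Measure.map_apply mTop hFmeas, hpreTop]
    have hneg : νneg (future x y) = μ S2 := by
      rw [← hends₁, Measure.map_apply mBot hFmeas, hpreBot]
    have hTxy : {γ : GeodesicLine X | Traverses γ x y} = S1 \ S2 := by
      ext γ
      simp only [Set.mem_setOf_eq, Set.mem_diff, hS1, hS2]
      exact traverses_iff htree hgeo hedge γ
    have hTyx : {γ : GeodesicLine X | Traverses γ y x} = S2 \ S1 := by
      ext γ
      simp only [Set.mem_setOf_eq, Set.mem_diff, hS1, hS2]
      rw [← traverses_rev x y γ, traverses_iff htree hgeo hedge (revLine γ)]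
      rw [lineA_rev, lineA_rev, lineB_rev, lineB_rev]
    show (νpos (future x y)).toReal - (νneg (future x y)).toReal = _
    rw [hpos, hneg, hTxy, hTyx]
    have h1 : μ (S1 \ S2) + μ (S1 ∩ S2) = μ S1 := measure_diff_add_inter S1 mS2
    have h2 : μ (S2 \ S1) + μ (S2 ∩ S1) = μ S2 := measure_diff_add_inter S2 mS1
    have hcomm : μ (S1 ∩ S2) = μ (S2 ∩ S1) := by rw [Set.inter_comm]
    have e1 : (μ S1).toReal = (μ (S1 \ S2)).toReal + (μ (S1 ∩ S2)).toReal := by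
      rw [← h1, ENNReal.toReal_add (measure_ne_top μ _) (measure_ne_top μ _)]
    have e2 : (μ S2).toReal = (μ (S2 \ S1)).toReal + (μ (S2 ∩ S1)).toReal := by
      rw [← h2, ENNReal.toReal_add (measure_ne_top μ _) (measure_ne_top μ _)]
    have e3 : (μ (S1 ∩ S2)).toReal = (μ (S2 ∩ S1)).toReal := by rw [hcomm]
    linarith
  · -- Part 2 : the vertex bound
    intro x _hx
    set P : Set (GeodesicLine X) := {γ : GeodesicLine X | ∃ t : ℝ, γ.1 t = x} with hP
    have hPeq : P = {γ : GeodesicLine X | lineA x γ + lineB x γ = 0} := by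
      ext γ
      exact line_mem_iff htree x γ
    have mP : MeasurableSet P := by
      rw [hPeq]
      exact (isClosed_eq ((continuous_lineA htree x).add (continuous_lineB htree x))
        continuous_const).measurableSet
    show (∑' C : ↥(complComponents x), max (signedFlow νneg νpos (dirBoundary x C.1)) 0)
      ≤ (μ P).toReal
    by_cases hsum : Summable
        (fun C : ↥(complComponents x) => max (signedFlow νneg νpos (dirBoundary x C.1)) 0)
    case neg =>
      rw [tsum_eq_zero_of_not_summable hsum]
      exact ENNReal.toReal_nonneg
    case pos =>
      apply hsum.tsum_le_of_sum_le
      intro s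
      set N : ↥(complComponents x) → Set (GeodesicLine X) := fun C =>
        (endTop ⁻¹' dirBoundary x C.1) \ (endBot ⁻¹' dirBoundary x C.1) with hN
      have mDir : ∀ C : ↥(complComponents x), MeasurableSet (dirBoundary x C.1) :=
        fun C => (isOpen_dirBoundary htree hgeo x C.2).measurableSet
      have mN : ∀ C, MeasurableSet (N C) :=
        fun C => (mTop (mDir C)).diff (mBot (mDir C))
      have hterm : ∀ C : ↥(complComponents x),
          max (signedFlow νneg νpos (dirBoundary x C.1)) 0 ≤ (μ (N C)).toReal := by
        intro C
        apply max_le _ ENNReal.toReal_nonneg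
        show (νpos (dirBoundary x C.1)).toReal - (νneg (dirBoundary x C.1)).toReal ≤ _
        have hp : νpos (dirBoundary x C.1) = μ (endTop ⁻¹' dirBoundary x C.1) := by
          rw [← hends₂, Measure.map_apply mTop (mDir C)]
        have hn : νneg (dirBoundary x C.1) = μ (endBot ⁻¹' dirBoundary x C.1) := by
          rw [← hends₁, Measure.map_apply mBot (mDir C)]
        rw [hp, hn]
        have hsplit : μ (N C) + μ ((endTop ⁻¹' dirBoundary x C.1) ∩ (endBot ⁻¹' dirBoundary x C.1))
            = μ (endTop ⁻¹' dirBoundary x C.1) :=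
          measure_diff_add_inter _ (mBot (mDir C))
        have hmono : μ ((endTop ⁻¹' dirBoundary x C.1) ∩ (endBot ⁻¹' dirBoundary x C.1))
            ≤ μ (endBot ⁻¹' dirBoundary x C.1) := measure_mono Set.inter_subset_right
        have e1 : (μ (endTop ⁻¹' dirBoundary x C.1)).toReal
            = (μ (N C)).toReal
              + (μ ((endTop ⁻¹' dirBoundary x C.1) ∩ (endBot ⁻¹' dirBoundary x C.1))).toReal := by
          rw [← hsplit, ENNReal.toReal_add (measure_ne_top μ _) (measure_ne_top μ _)]
        have e2 : (μ ((endTop ⁻¹' dirBoundary x C.1) ∩ (endBot ⁻¹' dirBoundary x C.1))).toReal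
            ≤ (μ (endBot ⁻¹' dirBoundary x C.1)).toReal :=
          (ENNReal.toReal_le_toReal (measure_ne_top μ _) (measure_ne_top μ _)).2 hmono
        linarith
      have hdisj : (↑s : Set ↥(complComponents x)).PairwiseDisjoint N := by
        intro C _ C' _ hne
        have hne1 : C.1 ≠ C'.1 := fun h => hne (Subtype.ext h)
        have hdd := dirBoundary_disjoint htree x C.2 C'.2 hne1
        exact Disjoint.mono Set.diff_subset Set.diff_subset
          ((hdd.preimage endTop).mono (le_refl _) (le_refl _) |>.mono
            (Set.preimage_mono (le_refl _)) (Set.preimage_mono (le_refl _)))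
      have hUsub : (⋃ C ∈ s, N C) ⊆ P := by
        intro γ hγ
        simp only [Set.mem_iUnion] at hγ
        obtain ⟨C, _, hγC⟩ := hγ
        have := passes_of_ends htree hgeo x C.2 γ hγC.1 hγC.2
        exact (line_mem_iff htree x γ).2 this
      calc ∑ C ∈ s, max (signedFlow νneg νpos (dirBoundary x C.1)) 0
          ≤ ∑ C ∈ s, (μ (N C)).toReal := Finset.sum_le_sum (fun C _ => hterm C)
        _ = (∑ C ∈ s, μ (N C)).toReal :=
            (ENNReal.toReal_sum (fun C _ => measure_ne_top μ _)).symm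
        _ = (μ (⋃ C ∈ s, N C)).toReal := by
            rw [measure_biUnion_finset hdisj (fun C _ => mN C)]
        _ ≤ (μ P).toReal :=
            (ENNReal.toReal_le_toReal (measure_ne_top μ _) (measure_ne_top μ _)).2
              (measure_mono hUsub)
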